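/- For all k-subsets s of {1,…,n} and ε ∈ ℝⁿ: (1/C(n−1,k−1)) · Σ_{s ∈ 𝒮} X_sᵀ ε_s ε_sᵀ X_s = Xᵀ L X, where L = diag(ε) A diag(ε) and A is the n×n matrix with diagonal entries 1 and off-diagonal entries (k−1)/(n−1). -/

import Mathlib

open Matrix Finset

lemma count_sub {α : Type*} [DecidableEq α] (k : ℕ) (t u : Finset α) (htu : t ⊆ u)
    (htk : t.card ≤ k) :
    ((powersetCard k u).filter (fun s => t ⊆ s)).card = (u.card - t.card).choose (k - t.card) := by
  rw [← card_sdiff_of_subset htu, ← card_powersetCard (k - t.card) (u \ t)]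
  apply Finset.card_bij (fun s _ => s \ t)
  · intro s hs
    simp only [mem_filter, mem_powersetCard] at hs
    obtain ⟨⟨hsu, hsk⟩, hts⟩ := hs
    simp only [mem_powersetCard]
    exact ⟨sdiff_subset_sdiff hsu le_rfl, by rw [card_sdiff_of_subset hts, hsk]⟩
  · intro s1 h1 s2 h2 heq
    simp only [mem_filter, mem_powersetCard] at h1 h2
    have e1 : s1 = (s1 \ t) ∪ t := by rw [sdiff_union_of_subset h1.2]
    have e2 : s2 = (s2 \ t) ∪ t := by rw [sdiff_union_of_subset h2.2]
    rw [e1, e2, heq]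
  · intro s' hs'
    simp only [mem_powersetCard] at hs'
    obtain ⟨hsu, hsc⟩ := hs'
    refine ⟨s' ∪ t, ?_, ?_⟩
    · simp only [mem_filter, mem_powersetCard]
      have hdisj : Disjoint s' t := (Finset.sdiff_disjoint (t := u) (s := t)).mono_left hsu
      refine ⟨⟨union_subset (hsu.trans sdiff_subset) htu, ?_⟩, subset_union_right⟩
      rw [card_union_of_disjoint hdisj, hsc]
      omega
    · have hdisj : Disjoint s' t := (Finset.sdiff_disjoint (t := u) (s := t)).mono_left hsu
      rw [union_sdiff_right, sdiff_eq_self_of_disjoint hdisj]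

theorem stmt13 {n p k : ℕ} (hn : 2 ≤ n) (hk : 1 ≤ k) (hkn : k ≤ n)
    (X : Matrix (Fin n) (Fin p) ℝ) (ε : Fin n → ℝ) (j j' : Fin p) :
    (1 / (Nat.choose (n - 1) (k - 1) : ℝ)) *
        ∑ s ∈ Finset.powersetCard k (Finset.univ : Finset (Fin n)),
          ∑ i ∈ s, ∑ i' ∈ s, X i j * ε i * ε i' * X i' j'
      = ∑ i : Fin n, ∑ i' : Fin n,
          X i j * ((if i = i' then (1 : ℝ) else ((k : ℝ) - 1) / ((n : ℝ) - 1))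
            * ε i * ε i') * X i' j' := by
  set P := Finset.powersetCard k (Finset.univ : Finset (Fin n)) with hP
  set f : Fin n → Fin n → ℝ := fun i i' => X i j * ε i * ε i' * X i' j' with hf
  have hC : (0:ℝ) < (Nat.choose (n - 1) (k - 1) : ℝ) := by
    exact_mod_cast Nat.choose_pos (by omega)
  have step1 : ∀ s ∈ P, ∑ i ∈ s, ∑ i' ∈ s, f i i'
      = ∑ i : Fin n, ∑ i' : Fin n, if i ∈ s ∧ i' ∈ s then f i i' else 0 := by
    intro s _
    have h1 : ∀ x : Fin n, ∑ x1 : Fin n, (if x ∈ s ∧ x1 ∈ s then f x x1 else 0)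
        = if x ∈ s then ∑ x1 ∈ s, f x x1 else 0 := by
      intro x
      by_cases hx : x ∈ s
      · simp only [hx, true_and, if_pos]
        rw [Finset.sum_ite_mem, univ_inter]
      · simp [hx]
    rw [eq_comm, Finset.sum_congr rfl (fun x _ => h1 x), Finset.sum_ite_mem, univ_inter]
  rw [Finset.sum_congr rfl step1, Finset.sum_comm]
  have step2 : ∀ i : Fin n, ∑ s ∈ P, ∑ i' : Fin n, (if i ∈ s ∧ i' ∈ s then f i i' else 0)
      = ∑ i' : Fin n, ((P.filter (fun s => i ∈ s ∧ i' ∈ s)).card : ℝ) * f i i' := by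
    intro i
    rw [Finset.sum_comm]
    refine Finset.sum_congr rfl fun i' _ => ?_
    rw [Finset.sum_ite, Finset.sum_const_zero, Finset.sum_const, add_zero, nsmul_eq_mul]
  rw [Finset.sum_congr rfl (fun i _ => step2 i), Finset.mul_sum]
  refine Finset.sum_congr rfl fun i _ => ?_
  rw [Finset.mul_sum]
  refine Finset.sum_congr rfl fun i' _ => ?_
  have hcnt : (P.filter (fun s => i ∈ s ∧ i' ∈ s)).card
      = if i = i' then Nat.choose (n-1) (k-1)
        else if 2 ≤ k then Nat.choose (n-2) (k-2) else 0 := by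
    split
    · next h =>
      subst h
      have : (P.filter (fun s => i ∈ s ∧ i ∈ s)) = P.filter (fun s => ({i} : Finset (Fin n)) ⊆ s) := by
        apply Finset.filter_congr; intro s _; simp
      rw [this, hP, count_sub k {i} univ (subset_univ _) (by simpa using hk)]
      simp [card_univ]
    · next h =>
      have heq : (P.filter (fun s => i ∈ s ∧ i' ∈ s))
          = P.filter (fun s => ({i, i'} : Finset (Fin n)) ⊆ s) := by
        apply Finset.filter_congr; intro s _; simp [insert_subset_iff]
      rw [heq]
      have hc2 : ({i, i'} : Finset (Fin n)).card = 2 := by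
        rw [card_insert_of_notMem (by simpa using h), card_singleton]
      split
      · next h2 =>
        rw [hP, count_sub k {i,i'} univ (subset_univ _) (by omega)]
        rw [hc2, card_univ, Fintype.card_fin]
      · next h2 =>
        rw [Finset.card_eq_zero, Finset.filter_eq_empty_iff]
        intro s hs hsub
        have := Finset.card_le_card hsub
        rw [hc2, (Finset.mem_powersetCard.1 hs).2] at this
        omega
  rw [hcnt]
  split
  · next h =>
    subst h
    rw [hf]
    rw [← mul_assoc, one_div_mul_cancel hC.ne', one_mul]
    ring
  · next h =>
    have hn1 : ((n:ℝ) - 1) ≠ 0 := by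
      have : (2:ℝ) ≤ n := by exact_mod_cast hn
      linarith
    rcases Nat.lt_or_ge k 2 with h2 | h2
    · have hk1 : k = 1 := by omega
      subst hk1
      simp
    · rw [if_pos h2]
      have key : (n - 1) * Nat.choose (n-2) (k-2) = Nat.choose (n-1) (k-1) * (k - 1) := by
        obtain ⟨m, rfl⟩ : ∃ m, n = m + 2 := ⟨n - 2, by omega⟩
        obtain ⟨l, rfl⟩ : ∃ l, k = l + 2 := ⟨k - 2, by omega⟩
        simpa using Nat.add_one_mul_choose_eq m l
      have keyR : ((Nat.choose (n-2) (k-2) : ℝ)) * ((n:ℝ) - 1) = (Nat.choose (n-1) (k-1) : ℝ) * ((k:ℝ) - 1) := by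
        have h1 : ((n - 1 : ℕ) : ℝ) = (n:ℝ) - 1 := by
          rw [Nat.cast_sub (by omega)]; simp
        have h2' : ((k - 1 : ℕ) : ℝ) = (k:ℝ) - 1 := by
          rw [Nat.cast_sub (by omega)]; simp
        have := congrArg (fun x : ℕ => (x : ℝ)) key
        push_cast [Nat.cast_sub (show 1 ≤ n by omega), Nat.cast_sub (show 1 ≤ k by omega)] at this
        linarith
      rw [hf]
      field_simp
      calc ((Nat.choose (n-2) (k-2) : ℝ)) * X i j * ε i * ε i' * X i' j' * ((n:ℝ)-1)
          = ((Nat.choose (n-2) (k-2) : ℝ) * ((n:ℝ)-1)) * (X i j * ε i * ε i' * X i' j') := by ring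
        _ = ((Nat.choose (n-1) (k-1) : ℝ) * ((k:ℝ)-1)) * (X i j * ε i * ε i' * X i' j') := by rw [keyR]
        _ = (Nat.choose (n-1) (k-1) : ℝ) * X i j * ε i * ε i' * X i' j' * ((k:ℝ)-1) := by ring
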